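/- Let (X1, X2, X3, X4) be a random vector in {-1,1}^4 satisfying both X1 ⟂ X3 | (X2, X4) and X2 ⟂ X4 | (X1, X3). Then the distribution of (X1, X2, X3, X4) satisfies the global Markov property with respect to the 4-cycle graph X1 — X2 — X3 — X4 — X1: for all disjoint subsets S, T, C of {1,2,3,4} such that C separates S from T in the 4-cycle, the subvector (X_i)_{i ∈ S} is conditionally independent of (X_j)_{j ∈ T} given (X_k)_{k ∈ C}. -/
import Mathlib


open MeasureTheory

/-- The event that the subvector `(X_i)_{i ∈ S}` takes the values prescribed by `v`. -/
def agrees {Ω : Type*} (X : Ω → Fin 4 → ℝ) (S : Finset (Fin 4)) (v : Fin 4 → ℝ) :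
    Set Ω :=
  {ω | ∀ i ∈ S, X ω i = v i}

/-- Conditional independence of the subvectors `X_S` and `X_T` given `X_C`,
for discrete (±1-valued) random vectors: the conditional pmf factorizes whenever
the conditioning value has positive probability. -/
def CondIndepSub {Ω : Type*} [MeasurableSpace Ω] (ℙ : Measure Ω)
    (X : Ω → Fin 4 → ℝ) (S T C : Finset (Fin 4)) : Prop :=
  ∀ a t c : Fin 4 → ℝ, 0 < (ℙ (agrees X C c)).toReal →
    (ℙ (agrees X S a ∩ agrees X T t ∩ agrees X C c)).toReal /
        (ℙ (agrees X C c)).toReal =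
      ((ℙ (agrees X S a ∩ agrees X C c)).toReal / (ℙ (agrees X C c)).toReal) *
        ((ℙ (agrees X T t ∩ agrees X C c)).toReal / (ℙ (agrees X C c)).toReal)

/-- The 4-cycle graph `X1 — X2 — X3 — X4 — X1` on `Fin 4`. -/
def cycleGraph : SimpleGraph (Fin 4) := SimpleGraph.fromRel (fun i j => j = i + 1)

/-- `C` separates `S` from `T`: every walk from a vertex of `S` to a vertex of `T`
passes through a vertex of `C`. -/
def Separates (S T C : Finset (Fin 4)) : Prop :=
  ∀ u ∈ S, ∀ v ∈ T, ∀ w : cycleGraph.Walk u v, ∃ k ∈ C, k ∈ w.support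

instance : DecidableRel cycleGraph.Adj := fun i j =>
  inferInstanceAs (Decidable (i ≠ j ∧ (j = i + 1 ∨ i = j + 1)))

def eW {i j : Fin 4} (h : cycleGraph.Adj i j := by decide) : cycleGraph.Walk i j :=
  SimpleGraph.Walk.cons h SimpleGraph.Walk.nil

lemma condIndepSub_symm {Ω : Type*} [MeasurableSpace Ω] {ℙ : Measure Ω}
    {X : Ω → Fin 4 → ℝ} {S T C : Finset (Fin 4)}
    (h : CondIndepSub ℙ X S T C) : CondIndepSub ℙ X T S C := by
  intro a t c hc
  rw [Set.inter_comm (agrees X T a) (agrees X S t), mul_comm]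
  exact h t a c hc

lemma condIndepSub_empty_left {Ω : Type*} [MeasurableSpace Ω] (ℙ : Measure Ω)
    (X : Ω → Fin 4 → ℝ) (T C : Finset (Fin 4)) : CondIndepSub ℙ X ∅ T C := by
  intro a t c hc
  have hA : agrees X ∅ a = Set.univ := by ext ω; simp [agrees]
  rw [hA, Set.univ_inter, Set.univ_inter, div_self hc.ne', one_mul]

lemma pin {S T C : Finset (Fin 4)} {u v a b : Fin 4}
    (hST : ∀ ⦃k⦄, k ∈ S → k ∉ T) (hSC : ∀ ⦃k⦄, k ∈ S → k ∉ C)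
    (hTC : ∀ ⦃k⦄, k ∈ T → k ∉ C)
    (hu : u ∈ S) (hv : v ∈ T) (ha : a ∈ C) (hb : b ∈ C)
    (hcover : ∀ i : Fin 4, i = u ∨ i = v ∨ i = a ∨ i = b) :
    S = {u} ∧ T = {v} ∧ C = {a, b} := by
  refine ⟨?_, ?_, ?_⟩ <;> ext i
  · simp only [Finset.mem_singleton]
    constructor
    · intro hi
      rcases hcover i with rfl | rfl | rfl | rfl
      · rfl
      · exact absurd hv (hST hi)
      · exact absurd ha (hSC hi)
      · exact absurd hb (hSC hi)
    · rintro rfl; exact hu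
  · simp only [Finset.mem_singleton]
    constructor
    · intro hi
      rcases hcover i with rfl | rfl | rfl | rfl
      · exact absurd hi (hST hu)
      · rfl
      · exact absurd ha (hTC hi)
      · exact absurd hb (hTC hi)
    · rintro rfl; exact hv
  · simp only [Finset.mem_insert, Finset.mem_singleton]
    constructor
    · intro hi
      rcases hcover i with rfl | rfl | rfl | rfl
      · exact absurd hi (hSC hu)
      · exact absurd hi (hTC hv)
      · exact Or.inl rfl
      · exact Or.inr rfl
    · rintro (rfl | rfl)
      · exact ha
      · exact hb

/-- If `(X1,X2,X3,X4) ∈ {-1,1}^4` satisfies `X1 ⟂ X3 | (X2,X4)` and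
`X2 ⟂ X4 | (X1,X3)`, then it satisfies the global Markov property with respect to
the 4-cycle. -/
theorem stmt17 {Ω : Type*} [MeasurableSpace Ω] (ℙ : Measure Ω)
    [IsProbabilityMeasure ℙ] (X : Ω → Fin 4 → ℝ) (hX : Measurable X)
    (hval : ∀ ω j, X ω j = 1 ∨ X ω j = -1)
    (h13 : CondIndepSub ℙ X {0} {2} {1, 3})
    (h24 : CondIndepSub ℙ X {1} {3} {0, 2}) :
    ∀ S T C : Finset (Fin 4),
      Disjoint S T → Disjoint S C → Disjoint T C →
      Separates S T C → CondIndepSub ℙ X S T C := by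
  intro S T C hST hSC hTC hsep
  rw [Finset.disjoint_left] at hST hSC hTC
  rcases S.eq_empty_or_nonempty with rfl | ⟨u, hu⟩
  · exact condIndepSub_empty_left ℙ X T C
  rcases T.eq_empty_or_nonempty with rfl | ⟨v, hv⟩
  · exact condIndepSub_symm (condIndepSub_empty_left ℙ X S C)
  have hall : ∀ w : Fin 4, w = 0 ∨ w = 1 ∨ w = 2 ∨ w = 3 := by decide
  rcases hall u with rfl | rfl | rfl | rfl <;> rcases hall v with rfl | rfl | rfl | rfl
  · exact absurd hv (hST hu)
  · have hw := hsep _ hu _ hv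
    obtain ⟨k, hkC, hks⟩ := hw (eW (i := 0) (j := 1) (by decide))
    simp only [eW, SimpleGraph.Walk.support_cons, SimpleGraph.Walk.support_nil,
      List.mem_cons, List.mem_singleton, List.not_mem_nil, or_false] at hks
    rcases hks with rfl | rfl
    · exact absurd hkC (hSC hu)
    · exact absurd hkC (hTC hv)
  · have hw := hsep _ hu _ hv
    obtain ⟨k1, hk1C, hk1s⟩ := hw
      ((eW (h := by decide) : cycleGraph.Walk 0 1).append (eW (h := by decide) : cycleGraph.Walk 1 2))
    obtain ⟨k2, hk2C, hk2s⟩ := hw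
      ((eW (h := by decide) : cycleGraph.Walk 0 3).append (eW (h := by decide) : cycleGraph.Walk 3 2))
    simp only [eW, SimpleGraph.Walk.support_append, SimpleGraph.Walk.support_cons,
      SimpleGraph.Walk.support_nil, List.tail, List.mem_append, List.mem_cons,
      List.mem_singleton, List.not_mem_nil, or_false, false_or] at hk1s hk2s
    have hc1 : (1 : Fin 4) ∈ C := by
      rcases hk1s with (rfl | rfl) | rfl
      exacts [absurd hk1C (hSC hu), hk1C, absurd hk1C (hTC hv)]
    have hc2 : (3 : Fin 4) ∈ C := by
      rcases hk2s with (rfl | rfl) | rfl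
      exacts [absurd hk2C (hSC hu), hk2C, absurd hk2C (hTC hv)]
    obtain ⟨rfl, rfl, rfl⟩ := pin hST hSC hTC hu hv hc1 hc2 (by decide)
    exact h13
  · have hw := hsep _ hu _ hv
    obtain ⟨k, hkC, hks⟩ := hw (eW (i := 0) (j := 3) (by decide))
    simp only [eW, SimpleGraph.Walk.support_cons, SimpleGraph.Walk.support_nil,
      List.mem_cons, List.mem_singleton, List.not_mem_nil, or_false] at hks
    rcases hks with rfl | rfl
    · exact absurd hkC (hSC hu)
    · exact absurd hkC (hTC hv)
  · have hw := hsep _ hu _ hv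
    obtain ⟨k, hkC, hks⟩ := hw (eW (i := 1) (j := 0) (by decide))
    simp only [eW, SimpleGraph.Walk.support_cons, SimpleGraph.Walk.support_nil,
      List.mem_cons, List.mem_singleton, List.not_mem_nil, or_false] at hks
    rcases hks with rfl | rfl
    · exact absurd hkC (hSC hu)
    · exact absurd hkC (hTC hv)
  · exact absurd hv (hST hu)
  · have hw := hsep _ hu _ hv
    obtain ⟨k, hkC, hks⟩ := hw (eW (i := 1) (j := 2) (by decide))
    simp only [eW, SimpleGraph.Walk.support_cons, SimpleGraph.Walk.support_nil,
      List.mem_cons, List.mem_singleton, List.not_mem_nil, or_false] at hks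
    rcases hks with rfl | rfl
    · exact absurd hkC (hSC hu)
    · exact absurd hkC (hTC hv)
  · have hw := hsep _ hu _ hv
    obtain ⟨k1, hk1C, hk1s⟩ := hw
      ((eW (h := by decide) : cycleGraph.Walk 1 2).append (eW (h := by decide) : cycleGraph.Walk 2 3))
    obtain ⟨k2, hk2C, hk2s⟩ := hw
      ((eW (h := by decide) : cycleGraph.Walk 1 0).append (eW (h := by decide) : cycleGraph.Walk 0 3))
    simp only [eW, SimpleGraph.Walk.support_append, SimpleGraph.Walk.support_cons,
      SimpleGraph.Walk.support_nil, List.tail, List.mem_append, List.mem_cons,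
      List.mem_singleton, List.not_mem_nil, or_false, false_or] at hk1s hk2s
    have hc1 : (2 : Fin 4) ∈ C := by
      rcases hk1s with (rfl | rfl) | rfl
      exacts [absurd hk1C (hSC hu), hk1C, absurd hk1C (hTC hv)]
    have hc2 : (0 : Fin 4) ∈ C := by
      rcases hk2s with (rfl | rfl) | rfl
      exacts [absurd hk2C (hSC hu), hk2C, absurd hk2C (hTC hv)]
    obtain ⟨rfl, rfl, rfl⟩ := pin hST hSC hTC hu hv hc2 hc1 (by decide)
    exact h24
  · have hw := hsep _ hu _ hv
    obtain ⟨k1, hk1C, hk1s⟩ := hw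
      ((eW (h := by decide) : cycleGraph.Walk 2 1).append (eW (h := by decide) : cycleGraph.Walk 1 0))
    obtain ⟨k2, hk2C, hk2s⟩ := hw
      ((eW (h := by decide) : cycleGraph.Walk 2 3).append (eW (h := by decide) : cycleGraph.Walk 3 0))
    simp only [eW, SimpleGraph.Walk.support_append, SimpleGraph.Walk.support_cons,
      SimpleGraph.Walk.support_nil, List.tail, List.mem_append, List.mem_cons,
      List.mem_singleton, List.not_mem_nil, or_false, false_or] at hk1s hk2s
    have hc1 : (1 : Fin 4) ∈ C := by
      rcases hk1s with (rfl | rfl) | rfl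
      exacts [absurd hk1C (hSC hu), hk1C, absurd hk1C (hTC hv)]
    have hc2 : (3 : Fin 4) ∈ C := by
      rcases hk2s with (rfl | rfl) | rfl
      exacts [absurd hk2C (hSC hu), hk2C, absurd hk2C (hTC hv)]
    obtain ⟨rfl, rfl, rfl⟩ := pin hST hSC hTC hu hv hc1 hc2 (by decide)
    exact condIndepSub_symm h13
  · have hw := hsep _ hu _ hv
    obtain ⟨k, hkC, hks⟩ := hw (eW (i := 2) (j := 1) (by decide))
    simp only [eW, SimpleGraph.Walk.support_cons, SimpleGraph.Walk.support_nil,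
      List.mem_cons, List.mem_singleton, List.not_mem_nil, or_false] at hks
    rcases hks with rfl | rfl
    · exact absurd hkC (hSC hu)
    · exact absurd hkC (hTC hv)
  · exact absurd hv (hST hu)
  · have hw := hsep _ hu _ hv
    obtain ⟨k, hkC, hks⟩ := hw (eW (i := 2) (j := 3) (by decide))
    simp only [eW, SimpleGraph.Walk.support_cons, SimpleGraph.Walk.support_nil,
      List.mem_cons, List.mem_singleton, List.not_mem_nil, or_false] at hks
    rcases hks with rfl | rfl
    · exact absurd hkC (hSC hu)
    · exact absurd hkC (hTC hv)
  · have hw := hsep _ hu _ hv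
    obtain ⟨k, hkC, hks⟩ := hw (eW (i := 3) (j := 0) (by decide))
    simp only [eW, SimpleGraph.Walk.support_cons, SimpleGraph.Walk.support_nil,
      List.mem_cons, List.mem_singleton, List.not_mem_nil, or_false] at hks
    rcases hks with rfl | rfl
    · exact absurd hkC (hSC hu)
    · exact absurd hkC (hTC hv)
  · have hw := hsep _ hu _ hv
    obtain ⟨k1, hk1C, hk1s⟩ := hw
      ((eW (h := by decide) : cycleGraph.Walk 3 2).append (eW (h := by decide) : cycleGraph.Walk 2 1))
    obtain ⟨k2, hk2C, hk2s⟩ := hw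
      ((eW (h := by decide) : cycleGraph.Walk 3 0).append (eW (h := by decide) : cycleGraph.Walk 0 1))
    simp only [eW, SimpleGraph.Walk.support_append, SimpleGraph.Walk.support_cons,
      SimpleGraph.Walk.support_nil, List.tail, List.mem_append, List.mem_cons,
      List.mem_singleton, List.not_mem_nil, or_false, false_or] at hk1s hk2s
    have hc1 : (2 : Fin 4) ∈ C := by
      rcases hk1s with (rfl | rfl) | rfl
      exacts [absurd hk1C (hSC hu), hk1C, absurd hk1C (hTC hv)]
    have hc2 : (0 : Fin 4) ∈ C := by
      rcases hk2s with (rfl | rfl) | rfl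
      exacts [absurd hk2C (hSC hu), hk2C, absurd hk2C (hTC hv)]
    obtain ⟨rfl, rfl, rfl⟩ := pin hST hSC hTC hu hv hc2 hc1 (by decide)
    exact condIndepSub_symm h24
  · have hw := hsep _ hu _ hv
    obtain ⟨k, hkC, hks⟩ := hw (eW (i := 3) (j := 2) (by decide))
    simp only [eW, SimpleGraph.Walk.support_cons, SimpleGraph.Walk.support_nil,
      List.mem_cons, List.mem_singleton, List.not_mem_nil, or_false] at hks
    rcases hks with rfl | rfl
    · exact absurd hkC (hSC hu)
    · exact absurd hkC (hTC hv)
  · exact absurd hv (hST hu)
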